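/- Let Δ be a distribution of Σ with M(Δ) ≠ ∅. Then (S_Δ, ≤_Δ) is a finite lattice. Concretely, for P, P' ∈ S_Δ: (i) [P ∪ P'] is the greatest lower bound of P and P' with respect to ≤_Δ; and (ii) the set obtained from {Δ'' ∈ M(Δ) : ∃ Δ_i ∈ P, ∃ Δ'_j ∈ P', Δ_i ∨ Δ'_j ≤_Σ Δ''} by keeping only its ≤_Σ-minimal members is the least upper bound of P and P' with respect to ≤_Δ. -/

import Mathlib

/-- A *distribution* of the (finite) alphabet `α`: a family of non-empty,
pairwise incomparable (under set inclusion) sub-alphabets whose union is `α`.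
Its size is `comps.ncard`. -/
structure Distr (α : Type) [Fintype α] where
  comps : Set (Set α)
  comps_nonempty : ∀ S ∈ comps, S.Nonempty
  comps_cover : ∀ a : α, ∃ S ∈ comps, a ∈ S
  comps_incomp : ∀ S ∈ comps, ∀ T ∈ comps, S ≠ T → ¬ S ⊆ T

section Defs

variable {α : Type} [Fintype α]

/-- Natural projection `P_{Σ'}`: erase from a string all symbols not in `S`. -/
noncomputable def projA (S : Set α) (s : List α) : List α :=
  s.filter fun a => @decide (a ∈ S) (Classical.propDecidable _)

/-- `L` is decomposable with respect to `Δ`: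
`L = ∥_i P_{Σ_i}(L) = ⋂_i P_{Σ_i}⁻¹(P_{Σ_i}(L))`. -/
def Decomposable (L : Set (List α)) (Δ : Distr α) : Prop :=
  L = ⋂ S ∈ Δ.comps, projA S ⁻¹' (projA S '' L)

/-- The partial order `≤_Σ` on distributions: every component of `Δ` is
contained in some component of `Δ'`. -/
def DistLE (Δ Δ' : Distr α) : Prop :=
  ∀ S ∈ Δ.comps, ∃ T ∈ Δ'.comps, S ⊆ T

/-- `P` is a *reduction* of `Δ`. -/
def IsReduction (P : Set (Distr α)) (Δ : Distr α) : Prop :=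
  2 ≤ P.ncard ∧
  (∀ Δ' ∈ P, Δ'.comps.ncard < Δ.comps.ncard) ∧
  (∀ L : Set (List α), Decomposable L Δ ↔ ∀ Δ' ∈ P, Decomposable L Δ')

/-- The maximal members (under set inclusion) of a family of sets. -/
def MaximalMem {β : Type} (F : Set (Set β)) : Set (Set β) :=
  {S | S ∈ F ∧ ∀ T ∈ F, S ⊆ T → S = T}

/-- The dependence relation `D_Δ`. -/
def DepRel (Δ : Distr α) : Set (α × α) :=
  {p | ∃ S ∈ Δ.comps, p.1 ∈ S ∧ p.2 ∈ S}

/-- The independence relation `I_Δ = Σ × Σ − D_Δ`. -/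
def IndepRel (Δ : Distr α) : Set (α × α) :=
  {p | ¬ ∃ S ∈ Δ.comps, p.1 ∈ S ∧ p.2 ∈ S}

/-- `Σ' ⊑ Δ`: `Σ'` is contained in some component of `Δ`. -/
def SqSub (S : Set α) (Δ : Distr α) : Prop :=
  ∃ T ∈ Δ.comps, S ⊆ T

/-- `Δ` is the greatest lower bound of the family `D` with respect to `≤_Σ`. -/
def IsGLBFam {l : ℕ} (D : Fin l → Distr α) (Δ : Distr α) : Prop :=
  (∀ i, DistLE Δ (D i)) ∧
  ∀ Δ''' : Distr α, (∀ i, DistLE Δ''' (D i)) → DistLE Δ''' Δ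

/-- `Δ'` is *merged* from `Δ`: `Δ' ≠ (Σ)` and `Δ'` is obtained from a
partition of the components of `Δ` having at least one block of size ≥ 2 by
taking the unions over the blocks and keeping only the maximal resulting
sub-alphabets. -/
def MergedFrom (Δ' Δ : Distr α) : Prop :=
  Δ'.comps ≠ {Set.univ} ∧
  ∃ part : Set (Set (Set α)),
    (∀ B ∈ part, B.Nonempty) ∧
    (∀ B ∈ part, B ⊆ Δ.comps) ∧
    (∀ B ∈ part, ∀ C ∈ part, B ≠ C → Disjoint B C) ∧
    (∀ S ∈ Δ.comps, ∃ B ∈ part, S ∈ B) ∧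
    (∃ B ∈ part, ∃ S ∈ B, ∃ T ∈ B, S ≠ T) ∧
    Δ'.comps = MaximalMem {U : Set α | ∃ B ∈ part, U = ⋃₀ B}

/-- Membership in the search space `S_Δ`: a set of distributions merged from
`Δ` that are pairwise `≤_Σ`-incomparable. -/
def MemS (Δ : Distr α) (P : Set (Distr α)) : Prop :=
  (∀ Δ' ∈ P, MergedFrom Δ' Δ) ∧
  ∀ Δ₁ ∈ P, ∀ Δ₂ ∈ P, Δ₁ ≠ Δ₂ → ¬ DistLE Δ₁ Δ₂

/-- The ordering `≤_Δ` on sets of distributions: every member of `Q` has a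
member of `P` below it with respect to `≤_Σ`. -/
def SetLE (P Q : Set (Distr α)) : Prop :=
  ∀ Δ' ∈ Q, ∃ Δ'' ∈ P, DistLE Δ'' Δ'

/-- `[F]`: the `≤_Σ`-minimal members of a set of distributions. -/
def MinimalD (F : Set (Distr α)) : Set (Distr α) :=
  {Δ' | Δ' ∈ F ∧ ∀ Δ'' ∈ F, DistLE Δ'' Δ' → DistLE Δ' Δ''}

/-- `Δ'` is obtained from `Δ` by merging exactly two components `S ≠ T`
(and keeping only the maximal sub-alphabets); the members of `⊥(Δ)`. -/
def MinMergedFrom (Δ' Δ : Distr α) : Prop :=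
  ∃ S ∈ Δ.comps, ∃ T ∈ Δ.comps, S ≠ T ∧
    Δ'.comps = MaximalMem ((Δ.comps \ {S, T}) ∪ {S ∪ T})

/-- The set `A(Δ)` of shared symbols of a distribution. -/
def SharedSyms (Δ : Distr α) : Set α :=
  {a | ∃ S ∈ Δ.comps, ∃ T ∈ Δ.comps, S ≠ T ∧ a ∈ S ∧ a ∈ T}

/-- The substitution of `Δ'` into the component `C` of `Δ''` yields `Δs`:
`Δs` is obtained from the components of `Δ''` other than `C` together with the
intersections `C ∩ S` for components `S` of `Δ'`, keeping only the maximal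
non-empty members. -/
def SubstResult (Δ' Δ'' : Distr α) (C : Set α) (Δs : Distr α) : Prop :=
  Δs.comps =
    MaximalMem {T : Set α |
      T.Nonempty ∧ (T ∈ Δ''.comps \ {C} ∨ ∃ S ∈ Δ'.comps, T = C ∩ S)}

/-- One swap of two adjacent symbols forming a pair in `I`. -/
def SwapStep (I : Set (α × α)) (s t : List α) : Prop :=
  ∃ (u v : List α) (a b : α),
    (a, b) ∈ I ∧ s = u ++ a :: b :: v ∧ t = u ++ b :: a :: v

/-- Trace equivalence with respect to `I`: a finite sequence of swaps of
adjacent independent symbols. -/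
def TraceEquiv (I : Set (α × α)) : List α → List α → Prop :=
  Relation.ReflTransGen (SwapStep I)

/-- `L` is trace-closed with respect to `I`. -/
def TraceClosed (I : Set (α × α)) (L : Set (List α)) : Prop :=
  L = {t | ∃ s ∈ L, TraceEquiv I s t}

/-- The map `N` determined by the enumeration `c` of the components of a
distribution: `N(a) = {i : a ∉ Σ_i}`. -/
def Nmap {n : ℕ} (c : Fin n → Set α) (a : α) : Set (Fin n) :=
  {i | a ∉ c i}

/-- A simple path from `x` to `y` in the graph `(Σ, D)`: a list of pairwise
distinct symbols, starting at `x`, ending at `y`, with consecutive symbols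
related by `D`. -/
def IsSimplePath (D : Set (α × α)) (p : List α) (x y : α) : Prop :=
  p.Nodup ∧ p.head? = some x ∧ p.getLast? = some y ∧
    p.Chain' (fun a b => (a, b) ∈ D)

/-- `Cr_D(S, y)` (with `N` given by the enumeration `c`): the set of indices
`i` such that some simple path `p` from some `x ∈ S` to `y` in `(Σ, D)`
satisfies `i ∈ ⋂_{a ∈ p.dropLast} N(a)`. -/
def CrSet {n : ℕ} (c : Fin n → Set α) (D : Set (α × α)) (S : Set α) (y : α) :
    Set (Fin n) :=
  {i | ∃ x ∈ S, ∃ p : List α,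
    IsSimplePath D p x y ∧ ∀ a ∈ p.dropLast, i ∈ Nmap c a}

/-- The smallest set of distributions containing `Q` and closed under
substitution. -/
inductive SubstClosure (Q : Set (Distr α)) : Distr α → Prop
  | base (Δ' : Distr α) (h : Δ' ∈ Q) : SubstClosure Q Δ'
  | step (Δ' Δ'' Δs : Distr α) (C : Set α)
      (h1 : SubstClosure Q Δ') (h2 : SubstClosure Q Δ'')
      (hC : C ∈ Δ''.comps) (hA : SharedSyms Δ' ⊆ C)
      (hs : SubstResult Δ' Δ'' C Δs) : SubstClosure Q Δs

end Defs

section Count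

variable {α : Type} [Fintype α] [DecidableEq α]

/-- `L(Σ_j)` (with `j` 0-indexed, so the paper's exponent `j+1` is `j+2`
here): all strings containing exactly one occurrence of each `σ_i ∈ Σ_j` and
exactly `j+2` occurrences of each `σ_i ∉ Σ_j`. -/
def Lword {m : ℕ} (σ : Fin m → α) (Sj : Set α) (j : ℕ) : Set (List α) :=
  {s | ∀ i : Fin m,
    (σ i ∈ Sj → s.count (σ i) = 1) ∧ (σ i ∉ Sj → s.count (σ i) = j + 2)}

/-- The candidate counter example `L_cand = ⋃_j L(Σ_j)`, relative to an
enumeration `c` of the components and an enumeration `σ` of the alphabet. -/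
def Lcand {n m : ℕ} (c : Fin n → Set α) (σ : Fin m → α) : Set (List α) :=
  ⋃ j : Fin n, Lword σ (c j) (j : ℕ)

end Count

section Aux

variable {α : Type} [Fintype α]

lemma distr_ext {Δ Δ' : Distr α} (h : Δ.comps = Δ'.comps) : Δ = Δ' := by
  cases Δ; cases Δ'; simp_all

lemma distLE_refl (Δ : Distr α) : DistLE Δ Δ := fun S hS => ⟨S, hS, subset_rfl⟩

lemma distLE_trans {Δ₁ Δ₂ Δ₃ : Distr α} (h1 : DistLE Δ₁ Δ₂) (h2 : DistLE Δ₂ Δ₃) :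
    DistLE Δ₁ Δ₃ := by
  intro S hS
  obtain ⟨T, hT, hST⟩ := h1 S hS
  obtain ⟨U, hU, hTU⟩ := h2 T hT
  exact ⟨U, hU, hST.trans hTU⟩

lemma distLE_antisymm {Δ₁ Δ₂ : Distr α} (h1 : DistLE Δ₁ Δ₂) (h2 : DistLE Δ₂ Δ₁) :
    Δ₁ = Δ₂ := by
  apply distr_ext
  have key : ∀ A B : Distr α, DistLE A B → DistLE B A → A.comps ⊆ B.comps := by
    intro A B hAB hBA S hS
    obtain ⟨T, hT, hST⟩ := hAB S hS
    obtain ⟨U, hU, hTU⟩ := hBA T hT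
    have hSU : S = U := by
      by_contra hne
      exact A.comps_incomp S hS U hU hne (hST.trans hTU)
    have hSTeq : S = T := subset_antisymm hST (hSU ▸ hTU)
    exact hSTeq ▸ hT
  exact subset_antisymm (key _ _ h1 h2) (key _ _ h2 h1)

instance : PartialOrder (Distr α) where
  le := DistLE
  le_refl := distLE_refl
  le_trans := fun _ _ _ => distLE_trans
  le_antisymm := fun _ _ => distLE_antisymm

lemma finite_distr : Finite (Distr α) :=
  Finite.of_injective (fun Δ : Distr α => Δ.comps) (fun _ _ h => distr_ext h)

lemma exists_minimalD_le {s : Set (Distr α)} {x : Distr α} (hx : x ∈ s) :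
    ∃ m ∈ MinimalD s, DistLE m x := by
  have : Finite (Distr α) := finite_distr
  obtain ⟨m, hm, hmin⟩ := Set.Finite.exists_minimalFor (id : Distr α → Distr α)
    {y ∈ s | DistLE y x} (Set.toFinite _) ⟨x, hx, distLE_refl x⟩
  refine ⟨m, ⟨hm.1, fun b hb hbm => ?_⟩, hm.2⟩
  have : b = m := distLE_antisymm hbm (hmin ⟨hb, distLE_trans hbm hm.2⟩ hbm)
  rw [this]
  exact distLE_refl m

lemma minimalD_incomp {s : Set (Distr α)} :
    ∀ Δ₁ ∈ MinimalD s, ∀ Δ₂ ∈ MinimalD s, Δ₁ ≠ Δ₂ → ¬ DistLE Δ₁ Δ₂ := by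
  intro Δ₁ h1 Δ₂ h2 hne h12
  exact hne (distLE_antisymm h12 (h2.2 Δ₁ h1.1 h12))

lemma exists_maximal_superset {F : Set (Set α)} {S : Set α} (hS : S ∈ F) :
    ∃ T ∈ MaximalMem F, S ⊆ T := by
  obtain ⟨T, hT, hmax⟩ := Set.Finite.exists_maximalFor (id : Set α → Set α)
    {U ∈ F | S ⊆ U} (Set.toFinite _) ⟨S, hS, subset_rfl⟩
  refine ⟨T, ⟨hT.1, fun U hU hTU => ?_⟩, hT.2⟩
  exact subset_antisymm hTU (hmax ⟨hU, hT.2.trans hTU⟩ hTU)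

lemma le_of_comps_eq_max {Δi Δj Δv : Distr α}
    (h : Δv.comps = MaximalMem (Δi.comps ∪ Δj.comps)) :
    DistLE Δi Δv ∧ DistLE Δj Δv := by
  constructor
  · intro S hS
    rw [h]
    exact exists_maximal_superset (Set.mem_union_left _ hS)
  · intro S hS
    rw [h]
    exact exists_maximal_superset (Set.mem_union_right _ hS)

/-- The join distribution `Δi ∨ Δj`. -/
def joinDistr (Δi Δj : Distr α) : Distr α where
  comps := MaximalMem (Δi.comps ∪ Δj.comps)
  comps_nonempty := fun S hS => by
    rcases hS.1 with h | h
    exacts [Δi.comps_nonempty S h, Δj.comps_nonempty S h]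
  comps_cover := fun a => by
    obtain ⟨S, hS, haS⟩ := Δi.comps_cover a
    obtain ⟨T, hT, hST⟩ := exists_maximal_superset (Set.mem_union_left Δj.comps hS)
    exact ⟨T, hT, hST haS⟩
  comps_incomp := fun S hS T hT hne hsub => hne (hS.2 T hT.1 hsub)

lemma joinDistr_le {Δi Δj q : Distr α} (hi : DistLE Δi q) (hj : DistLE Δj q) :
    DistLE (joinDistr Δi Δj) q := by
  intro S hS
  rcases hS.1 with h | h
  exacts [hi S h, hj S h]

end Aux

/-- For a distribution `Δ` with `M(Δ) ≠ ∅`, `(S_Δ, ≤_Δ)` is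
a (finite) lattice: `[P ∪ P']` is the greatest lower bound of `P, P'`, and the
`≤_Σ`-minimal members of `{Δ'' ∈ M(Δ) | ∃ Δi ∈ P, Δj ∈ P', Δi ∨ Δj ≤_Σ Δ''}`
form the least upper bound of `P, P'`. -/
theorem statement_4 {α : Type} [Fintype α] (Δ : Distr α)
    (hM : ∃ Δ0 : Distr α, MergedFrom Δ0 Δ)
    (P P' Pm PJ : Set (Distr α)) (hP : MemS Δ P) (hP' : MemS Δ P')
    (hPm : Pm = MinimalD (P ∪ P'))
    (hPJ : PJ = MinimalD {Δ'' : Distr α | MergedFrom Δ'' Δ ∧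
      ∃ Δi ∈ P, ∃ Δj ∈ P', ∃ Δv : Distr α,
        Δv.comps = MaximalMem (Δi.comps ∪ Δj.comps) ∧ DistLE Δv Δ''}) :
    (MemS Δ Pm ∧ SetLE Pm P ∧ SetLE Pm P' ∧
      ∀ Q : Set (Distr α), MemS Δ Q → SetLE Q P → SetLE Q P' → SetLE Q Pm) ∧
    (MemS Δ PJ ∧ SetLE P PJ ∧ SetLE P' PJ ∧
      ∀ Q : Set (Distr α), MemS Δ Q → SetLE P Q → SetLE P' Q → SetLE PJ Q) := by
  subst hPm hPJ
  constructor
  · refine ⟨⟨?_, minimalD_incomp⟩, ?_, ?_, ?_⟩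
    · intro Δ' hΔ'
      rcases hΔ'.1 with h | h
      exacts [hP.1 Δ' h, hP'.1 Δ' h]
    · intro Δ' hΔ'
      exact exists_minimalD_le (Set.mem_union_left _ hΔ')
    · intro Δ' hΔ'
      exact exists_minimalD_le (Set.mem_union_right _ hΔ')
    · intro Q _ hQP hQP' Δ' hΔ'
      rcases hΔ'.1 with h | h
      exacts [hQP Δ' h, hQP' Δ' h]
  · refine ⟨⟨?_, minimalD_incomp⟩, ?_, ?_, ?_⟩
    · intro Δ'' hΔ''
      exact hΔ''.1.1
    · intro Δ'' hΔ''
      obtain ⟨Δi, hΔi, Δj, hΔj, Δv, hv, hle⟩ := hΔ''.1.2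
      exact ⟨Δi, hΔi, distLE_trans (le_of_comps_eq_max hv).1 hle⟩
    · intro Δ'' hΔ''
      obtain ⟨Δi, hΔi, Δj, hΔj, Δv, hv, hle⟩ := hΔ''.1.2
      exact ⟨Δj, hΔj, distLE_trans (le_of_comps_eq_max hv).2 hle⟩
    · intro Q hQ hPQ hP'Q q hq
      obtain ⟨Δi, hΔi, hiq⟩ := hPQ q hq
      obtain ⟨Δj, hΔj, hjq⟩ := hP'Q q hq
      have hqF : q ∈ {Δ'' : Distr α | MergedFrom Δ'' Δ ∧
          ∃ Δi ∈ P, ∃ Δj ∈ P', ∃ Δv : Distr α,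
            Δv.comps = MaximalMem (Δi.comps ∪ Δj.comps) ∧ DistLE Δv Δ''} :=
        ⟨hQ.1 q hq, Δi, hΔi, Δj, hΔj, joinDistr Δi Δj, rfl, joinDistr_le hiq hjq⟩
      exact exists_minimalD_le hqF
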